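/- Let n ≥ 3 be an integer and F a finite field with q elements. The number of pairs (g0, g1) ∈ Fⁿ × Fⁿ such that every entry of g0 is nonzero and for all indices 1 ≤ i < j ≤ n one has g0,i·g1,j − g0,j·g1,i ≠ 0 equals q·(q−1)^(n+1)·∏_{i=2}^{n−1}(q−i). -/

import Mathlib

noncomputable def myEquiv (n : ℕ) (F : Type*) [Field F] [Fintype F] :
    {p : (Fin n → F) × (Fin n → F) //
      (∀ i, p.1 i ≠ 0) ∧ ∀ i j : Fin n, i < j → p.1 i * p.2 j - p.1 j * p.2 i ≠ 0}
    ≃ (Fin n ↪ F) × (Fin n → Fˣ) where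
  toFun p := (⟨fun i => p.1.2 i / p.1.1 i, by
      intro i j hij
      by_contra hne
      rcases lt_or_gt_of_ne hne with h | h
      · exact p.2.2 i j h (by field_simp [p.2.1 i, p.2.1 j] at hij; linear_combination -hij)
      · exact p.2.2 j i h (by field_simp [p.2.1 i, p.2.1 j] at hij; linear_combination hij)⟩,
    fun i => Units.mk0 (p.1.1 i) (p.2.1 i))
  invFun fu := ⟨(fun i => (fu.2 i : F), fun i => (fu.2 i : F) * fu.1 i), by
    constructor
    · intro i; exact (fu.2 i).ne_zero
    · intro i j hij h
      apply fu.1.injective.ne hij.ne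
      have h2 : (fu.2 i : F) * (fu.2 j : F) * (fu.1 j - fu.1 i) = 0 := by
        linear_combination h
      rcases mul_eq_zero.1 h2 with h3 | h3
      · exact absurd h3 (mul_ne_zero (fu.2 i).ne_zero (fu.2 j).ne_zero)
      · exact sub_eq_zero.1 h3 |>.symm⟩
  left_inv p := by
    ext i <;> simp [mul_div_cancel₀ _ (p.2.1 i)]
    change p.1.1 i * (p.1.2 i / p.1.1 i) = p.1.2 i
    field_simp [p.2.1 i]
  right_inv fu := by
    ext i <;> simp [mul_div_cancel_left₀ _ (fu.2 i).ne_zero]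

theorem stmt2 (n : ℕ) (hn : 3 ≤ n) (F : Type*) [Field F] [Fintype F] :
    Nat.card {p : (Fin n → F) × (Fin n → F) //
      (∀ i, p.1 i ≠ 0) ∧ ∀ i j : Fin n, i < j → p.1 i * p.2 j - p.1 j * p.2 i ≠ 0}
    = Fintype.card F * (Fintype.card F - 1) ^ (n + 1) *
      ∏ i ∈ Finset.Icc 2 (n - 1), (Fintype.card F - i) := by
  set q := Fintype.card F with hq
  have h1 : Nat.card {p : (Fin n → F) × (Fin n → F) //
      (∀ i, p.1 i ≠ 0) ∧ ∀ i j : Fin n, i < j → p.1 i * p.2 j - p.1 j * p.2 i ≠ 0}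
      = q.descFactorial n * (q - 1) ^ n := by
    classical
    rw [Nat.card_congr (myEquiv n F), Nat.card_prod, Nat.card_eq_fintype_card,
      Nat.card_eq_fintype_card, Fintype.card_embedding_eq, Fintype.card_fun,
      Fintype.card_units, Fintype.card_fin]
  rw [h1, Nat.descFactorial_eq_prod_range, Finset.range_eq_Ico,
    ← Finset.prod_Ico_consecutive _ (Nat.zero_le 2) (by omega : 2 ≤ n)]
  have hIcc : Finset.Icc 2 (n - 1) = Finset.Ico 2 n := by
    ext x; simp; omega
  rw [hIcc, ← Finset.range_eq_Ico]
  simp [Finset.prod_range_succ]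
  ring
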